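/- Let k = 2^s and let B ⊆ [k] with 0 < |B| = ℓ ≤ k/2, and suppose B has exactly m boundary points, i.e. m = #{b ∈ [k-1] : exactly one of b, b+1 is in B}. Identify [k] with {0,1}^s via binary expansion and let ∂̃(B) be the edge-boundary of the corresponding subset of the hypercube. Then |∂̃(B)| ≤ 6 ℓ log₂(mk/ℓ). -/

import Mathlib

/-- The edge-boundary, in the hypercube `{0,1}^s` (identified with `[k]`, `k = 2^s`, via
binary expansion), of `B ⊆ [k]`: each hypercube edge counted once, from its endpoint whose
`i`-th digit is `0`. -/
def cubeBoundary (k s : ℕ) (B : Finset ℕ) : ℕ :=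
  (((Finset.Icc 1 k ×ˢ Finset.Icc 1 s)).filter
    (fun p => (p.1 - 1).testBit (p.2 - 1) = false ∧
      ((p.1 ∈ B) ≠ (p.1 + 2 ^ (p.2 - 1) ∈ B)))).card

def dirSet (k : ℕ) (B : Finset ℕ) (j : ℕ) : Finset ℕ :=
  (Finset.Icc 1 k).filter (fun x => (x - 1).testBit (j - 1) = false ∧
    ((x ∈ B) ≠ (x + 2 ^ (j - 1) ∈ B)))

lemma my_decomp (k s : ℕ) (B : Finset ℕ) :
    cubeBoundary k s B = ∑ j ∈ Finset.Icc 1 s, (dirSet k B j).card := by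
  unfold cubeBoundary dirSet
  rw [Finset.card_filter, Finset.sum_product]
  rw [Finset.sum_comm]
  congr 1
  ext j
  rw [Finset.card_filter]

lemma my_testbit_add (a i : ℕ) (hb : a.testBit i = false) : (a + 2 ^ i).testBit i = true := by
  rw [Nat.testBit_eq_decide_div_mod_eq] at hb ⊢
  rw [Nat.add_div_right _ (Nat.two_pow_pos i)]
  simp only [decide_eq_false_iff_not, decide_eq_true_eq] at hb ⊢
  omega

lemma my_card_le_B (k : ℕ) (B : Finset ℕ) (j : ℕ) (hj : 1 ≤ j) :
    (dirSet k B j).card ≤ B.card := by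
  apply Finset.card_le_card_of_injOn (fun x => if x ∈ B then x else x + 2 ^ (j - 1))
  · intro x hx
    simp only [dirSet, Finset.mem_coe, Finset.mem_filter, Finset.mem_Icc] at hx
    by_cases hxB : x ∈ B
    · simpa [hxB] using hxB
    · simp only [hxB, if_false, Finset.mem_coe]
      rcases hx with ⟨_, _, hne⟩
      by_contra hc
      exact hne (by simp [hxB, hc])
  · intro x hx y hy hxy
    simp only [dirSet, Finset.mem_coe, Finset.mem_filter, Finset.mem_Icc] at hx hy
    obtain ⟨⟨hx1, _⟩, hxb, _⟩ := hx
    obtain ⟨⟨hy1, _⟩, hyb, _⟩ := hy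
    simp only at hxy
    by_cases hxB : x ∈ B <;> by_cases hyB : y ∈ B <;>
      simp only [hxB, hyB, if_true, if_false] at hxy
    · exact hxy
    · exfalso
      have h1 : (y - 1 + 2 ^ (j - 1)).testBit (j - 1) = true := my_testbit_add _ _ hyb
      have h2 : x - 1 = y - 1 + 2 ^ (j - 1) := by omega
      rw [← h2, hxb] at h1; exact Bool.false_ne_true h1
    · exfalso
      have h1 : (x - 1 + 2 ^ (j - 1)).testBit (j - 1) = true := my_testbit_add _ _ hxb
      have h2 : y - 1 = x - 1 + 2 ^ (j - 1) := by omega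
      rw [← h2, hyb] at h1; exact Bool.false_ne_true h1
    · omega

-- discrete IVT
lemma my_ivt (B : Finset ℕ) : ∀ n x, ((x ∈ B) ≠ (x + n ∈ B)) →
    ∃ y, x ≤ y ∧ y < x + n ∧ ((y ∈ B) ≠ (y + 1 ∈ B)) := by
  intro n
  induction n with
  | zero => intro x h; simp at h
  | succ n ih =>
    intro x h
    by_cases h1 : (x ∈ B) ≠ (x + n ∈ B)
    · obtain ⟨y, hy1, hy2, hy3⟩ := ih x h1
      exact ⟨y, hy1, by omega, hy3⟩
    · refine ⟨x + n, by omega, by omega, ?_⟩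
      push_neg at h1
      rw [← h1]
      convert h using 2
      omega

lemma my_bit_lt (s j x : ℕ) (hj : 1 ≤ j) (hjs : j ≤ s) (hx : 1 ≤ x) (hxk : x ≤ 2 ^ s)
    (hb : (x - 1).testBit (j - 1) = false) : x + 2 ^ (j - 1) ≤ 2 ^ s := by
  obtain ⟨a, rfl⟩ : ∃ a, x = a + 1 := ⟨x - 1, by omega⟩
  simp only [Nat.add_sub_cancel] at hb
  rw [Nat.testBit_eq_decide_div_mod_eq, decide_eq_false_iff_not] at hb
  set d := 2 ^ (j - 1) with hd
  set q := a / d with hq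
  have hdm : d * q + a % d = a := Nat.div_add_mod a d
  have hr : a % d < d := Nat.mod_lt _ (Nat.two_pow_pos _)
  have hqe : q % 2 = 0 := by omega
  have hpow : 2 ^ s = 2 ^ (s - j + 1) * d := by
    rw [hd, ← pow_add]; congr 1; omega
  have hev : 2 ^ (s - j + 1) % 2 = 0 := by
    obtain ⟨t, ht⟩ : ∃ t, s - j + 1 = t + 1 := ⟨s - j, rfl⟩
    rw [ht, pow_succ, Nat.mul_mod_left]
  have hqlt : q < 2 ^ (s - j + 1) := by
    have h1 : d * q < d * 2 ^ (s - j + 1) := by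
      calc d * q ≤ a := by omega
        _ < 2 ^ s := by omega
        _ = d * 2 ^ (s - j + 1) := by rw [hpow, Nat.mul_comm]
    exact Nat.lt_of_mul_lt_mul_left h1
  have hq2 : q + 2 ≤ 2 ^ (s - j + 1) := by omega
  have h2 : d * (q + 2) ≤ d * 2 ^ (s - j + 1) := Nat.mul_le_mul_left d hq2
  have h3 : d * (q + 2) = d * q + d + d := by ring
  have hpow' : 2 ^ s = d * 2 ^ (s - j + 1) := by rw [hpow, Nat.mul_comm]
  omega

lemma my_card_le_m (s k : ℕ) (hk : k = 2 ^ s) (B : Finset ℕ) (j : ℕ) (hj : 1 ≤ j) (hjs : j ≤ s) :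
    (dirSet k B j).card ≤
      ((Finset.Icc 1 (k - 1)).filter (fun y => (y ∈ B) ≠ (y + 1 ∈ B))).card * 2 ^ (j - 1) := by
  set bd := (Finset.Icc 1 (k - 1)).filter (fun y => (y ∈ B) ≠ (y + 1 ∈ B)) with hbd
  have hsub : dirSet k B j ⊆ bd.biUnion (fun y => Finset.Icc (y + 1 - 2 ^ (j - 1)) y) := by
    intro x hx
    simp only [dirSet, Finset.mem_filter, Finset.mem_Icc] at hx
    obtain ⟨⟨hx1, hxk⟩, hxb, hne⟩ := hx
    obtain ⟨y, hy1, hy2, hy3⟩ := my_ivt B (2 ^ (j - 1)) x hne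
    have hxd : x + 2 ^ (j - 1) ≤ k := by
      rw [hk]; exact my_bit_lt s j x hj hjs hx1 (hk ▸ hxk) hxb
    rw [Finset.mem_biUnion]
    refine ⟨y, ?_, ?_⟩
    · rw [hbd, Finset.mem_filter, Finset.mem_Icc]
      exact ⟨⟨by omega, by omega⟩, hy3⟩
    · rw [Finset.mem_Icc]; omega
  calc (dirSet k B j).card ≤ (bd.biUnion (fun y => Finset.Icc (y + 1 - 2 ^ (j - 1)) y)).card :=
        Finset.card_le_card hsub
    _ ≤ ∑ y ∈ bd, (Finset.Icc (y + 1 - 2 ^ (j - 1)) y).card := Finset.card_biUnion_le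
    _ ≤ ∑ y ∈ bd, 2 ^ (j - 1) := by
        apply Finset.sum_le_sum
        intro y _
        rw [Nat.card_Icc]
        generalize 2 ^ (j - 1) = t
        omega
    _ = bd.card * 2 ^ (j - 1) := by rw [Finset.sum_const, smul_eq_mul]

lemma my_m_pos (s k : ℕ) (hs : 0 < s) (hk : k = 2 ^ s) (B : Finset ℕ)
    (hB : B ⊆ Finset.Icc 1 k) (hne : B.Nonempty) (hlt : B.card < k) :
    0 < ((Finset.Icc 1 (k - 1)).filter (fun y => (y ∈ B) ≠ (y + 1 ∈ B))).card := by
  obtain ⟨a, ha⟩ := hne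
  have hcard : (Finset.Icc 1 k).card = k := by rw [Nat.card_Icc]; omega
  have hss : B ⊂ Finset.Icc 1 k := Finset.ssubset_iff_subset_ne.mpr
    ⟨hB, fun h => by rw [h, hcard] at hlt; omega⟩
  obtain ⟨c, hc1, hc2⟩ := Finset.exists_of_ssubset hss
  rw [Finset.mem_Icc] at hc1
  have haI := hB ha
  rw [Finset.mem_Icc] at haI
  rw [Finset.card_pos]
  have hac : a ≠ c := fun h => hc2 (h ▸ ha)
  rcases Nat.lt_or_ge a c with h | h
  · obtain ⟨y, hy1, hy2, hy3⟩ := my_ivt B (c - a) a (by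
      have : a + (c - a) = c := by omega
      rw [this]
      simp [ha, hc2])
    exact ⟨y, Finset.mem_filter.mpr ⟨Finset.mem_Icc.mpr ⟨by omega, by omega⟩, hy3⟩⟩
  · have hca : c < a := by omega
    obtain ⟨y, hy1, hy2, hy3⟩ := my_ivt B (a - c) c (by
      have : c + (a - c) = a := by omega
      rw [this]
      simp [ha, hc2])
    exact ⟨y, Finset.mem_filter.mpr ⟨Finset.mem_Icc.mpr ⟨by omega, by omega⟩, hy3⟩⟩

lemma my_geom2 (n : ℕ) : ∑ j ∈ Finset.Icc 1 n, 2 ^ (j - 1) = 2 ^ n - 1 := by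
  induction n with
  | zero => simp
  | succ n ih =>
    rw [Finset.sum_Icc_succ_top (by omega : 1 ≤ n + 1), ih]
    simp only [Nat.add_sub_cancel]
    have h1 : (1:ℕ) ≤ 2 ^ n := Nat.one_le_two_pow
    have h2 : 2 ^ (n + 1) = 2 * 2 ^ n := by ring
    omega

/-- For `k = 2^s` and `B ⊆ [k]` with `0 < |B| = ℓ ≤ k/2` and exactly `m`
boundary points in `[k-1]`, the hypercube edge-boundary satisfies
`|∂̃ B| ≤ 6 ℓ log₂(mk/ℓ)`. -/
theorem stmt4 (s k : ℕ) (hs : 0 < s) (hk : k = 2 ^ s)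
    (B : Finset ℕ) (hB : B ⊆ Finset.Icc 1 k) (ℓ m : ℕ)
    (hℓ : B.card = ℓ) (hpos : 0 < ℓ) (hhalf : ℓ ≤ k / 2)
    (hm : ((Finset.Icc 1 (k - 1)).filter (fun y => (y ∈ B) ≠ (y + 1 ∈ B))).card = m) :
    (cubeBoundary k s B : ℝ) ≤ 6 * ℓ * Real.logb 2 (((m : ℝ) * k) / ℓ) := by
  have hk2 : 2 ≤ k := by rw [hk]; exact Nat.one_lt_two_pow_iff.mpr (by omega)
  have h2ℓ : 2 * ℓ ≤ k := by
    have := (Nat.le_div_iff_mul_le (by norm_num : 0 < 2)).mp hhalf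
    omega
  have hm1 : 1 ≤ m := by
    rw [← hm]
    exact my_m_pos s k hs hk B hB (Finset.card_pos.mp (by omega)) (by omega)
  -- T = directions where m * 2^(j-1) ≥ ℓ
  set T := (Finset.Icc 1 s).filter (fun j => ℓ ≤ m * 2 ^ (j - 1)) with hT
  have hsT : s ∈ T := by
    rw [hT, Finset.mem_filter, Finset.mem_Icc]
    refine ⟨⟨hs, le_refl s⟩, ?_⟩
    have h1 : ℓ ≤ 2 ^ (s - 1) := by
      have : 2 ^ s = 2 * 2 ^ (s - 1) := by
        rw [← pow_succ']; congr 1; omega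
      omega
    calc ℓ ≤ 2 ^ (s - 1) := h1
      _ ≤ m * 2 ^ (s - 1) := Nat.le_mul_of_pos_left _ (by omega)
  have hTne : T.Nonempty := ⟨s, hsT⟩
  set j1 := T.min' hTne with hj1
  have hj1T : j1 ∈ T := T.min'_mem hTne
  have hj1s : 1 ≤ j1 ∧ j1 ≤ s := by
    have := Finset.mem_of_mem_filter j1 hj1T
    rw [Finset.mem_Icc] at this; exact this
  have hj1ℓ : ℓ ≤ m * 2 ^ (j1 - 1) := by
    have := Finset.mem_filter.mp hj1T
    exact this.2
  have hTcard : T.card ≤ s - j1 + 1 := by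
    have hsub : T ⊆ Finset.Icc j1 s := by
      intro j hj
      rw [Finset.mem_Icc]
      refine ⟨T.min'_le j hj, ?_⟩
      have := Finset.mem_of_mem_filter j hj
      rw [Finset.mem_Icc] at this; exact this.2
    calc T.card ≤ (Finset.Icc j1 s).card := Finset.card_le_card hsub
      _ = s - j1 + 1 := by rw [Nat.card_Icc]; omega
  -- nat bound on the boundary
  set S := (Finset.Icc 1 s).filter (fun j => ¬ ℓ ≤ m * 2 ^ (j - 1)) with hS
  have hnat : cubeBoundary k s B ≤ 2 * ℓ + ℓ * T.card := by
    rw [my_decomp]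
    rw [← Finset.sum_filter_add_sum_filter_not (Finset.Icc 1 s) (fun j => ℓ ≤ m * 2 ^ (j - 1))]
    rw [← hT, ← hS]
    have hpart2 : ∑ j ∈ T, (dirSet k B j).card ≤ ℓ * T.card := by
      calc ∑ j ∈ T, (dirSet k B j).card ≤ ∑ j ∈ T, ℓ := by
            apply Finset.sum_le_sum
            intro j hj
            have hj1' : 1 ≤ j := by
              have := Finset.mem_of_mem_filter j hj
              rw [Finset.mem_Icc] at this; exact this.1
            rw [← hℓ]; exact my_card_le_B k B j hj1'
        _ = ℓ * T.card := by rw [Finset.sum_const, smul_eq_mul, Nat.mul_comm]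
    have hpart1 : ∑ j ∈ S, (dirSet k B j).card ≤ 2 * ℓ := by
      rcases Finset.eq_empty_or_nonempty S with hSe | hSne
      · rw [hSe]; simp
      · set jm := S.max' hSne with hjm
        have hjmS : jm ∈ S := S.max'_mem hSne
        have hjmlt : m * 2 ^ (jm - 1) < ℓ := by
          have := (Finset.mem_filter.mp hjmS).2
          omega
        have hjm1 : 1 ≤ jm := by
          have := Finset.mem_of_mem_filter jm hjmS
          rw [Finset.mem_Icc] at this; exact this.1
        have hsubS : S ⊆ Finset.Icc 1 jm := by
          intro j hj
          rw [Finset.mem_Icc]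
          have h1 := Finset.mem_of_mem_filter j hj
          rw [Finset.mem_Icc] at h1
          exact ⟨h1.1, S.le_max' j hj⟩
        calc ∑ j ∈ S, (dirSet k B j).card
            ≤ ∑ j ∈ S, m * 2 ^ (j - 1) := by
              apply Finset.sum_le_sum
              intro j hj
              have h1 := Finset.mem_of_mem_filter j hj
              rw [Finset.mem_Icc] at h1
              rw [← hm]
              exact my_card_le_m s k hk B j h1.1 h1.2
          _ ≤ ∑ j ∈ Finset.Icc 1 jm, m * 2 ^ (j - 1) :=
              Finset.sum_le_sum_of_subset hsubS
          _ = m * (2 ^ jm - 1) := by rw [← Finset.mul_sum, my_geom2]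
          _ ≤ 2 * ℓ := by
              have h2 : 2 ^ jm = 2 * 2 ^ (jm - 1) := by
                rw [← pow_succ']; congr 1; omega
              have h3 : m * (2 ^ jm - 1) ≤ m * 2 ^ jm := Nat.mul_le_mul_left m (Nat.sub_le _ _)
              have h4 : m * 2 ^ jm = 2 * (m * 2 ^ (jm - 1)) := by rw [h2]; ring
              omega
    omega
  -- real arithmetic
  set L := Real.logb 2 (((m : ℝ) * k) / ℓ) with hL
  have hℓR : (0:ℝ) < ℓ := by exact_mod_cast hpos
  have hq2 : (2:ℝ) ≤ ((m : ℝ) * k) / ℓ := by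
    rw [le_div_iff₀ hℓR]
    have h1 : (2:ℝ) * ℓ ≤ k := by exact_mod_cast h2ℓ
    have h2 : (1:ℝ) ≤ m := by exact_mod_cast hm1
    have hk0 : (0:ℝ) < k := by exact_mod_cast (by omega : 0 < k)
    nlinarith
  have hL1 : 1 ≤ L := by
    rw [hL]
    calc (1:ℝ) = Real.logb 2 2 := (Real.logb_self_eq_one (by norm_num)).symm
      _ ≤ _ := Real.logb_le_logb_of_le (by norm_num) (by norm_num) hq2
  have hLT : (T.card : ℝ) ≤ L := by
    have hpow : (2:ℝ) ^ (s - j1 + 1) ≤ ((m : ℝ) * k) / ℓ := by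
      rw [le_div_iff₀ hℓR]
      have hsplit : (2:ℝ) ^ (j1 - 1) * 2 ^ (s - j1 + 1) = 2 ^ s := by
        rw [← pow_add]
        congr 1
        omega
      have h1 : (ℓ:ℝ) ≤ (m:ℝ) * 2 ^ (j1 - 1) := by exact_mod_cast hj1ℓ
      have h2 : (k:ℝ) = 2 ^ s := by exact_mod_cast hk
      have h3 : (0:ℝ) < 2 ^ (s - j1 + 1) := by positivity
      calc (2:ℝ) ^ (s - j1 + 1) * ℓ ≤ 2 ^ (s - j1 + 1) * ((m:ℝ) * 2 ^ (j1 - 1)) := by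
            nlinarith
        _ = (m:ℝ) * (2 ^ (j1 - 1) * 2 ^ (s - j1 + 1)) := by ring
        _ = (m:ℝ) * 2 ^ s := by rw [hsplit]
        _ = (m:ℝ) * k := by rw [h2]
    have hc1 : (T.card : ℝ) ≤ ((s - j1 + 1 : ℕ) : ℝ) := by exact_mod_cast hTcard
    have hc2 : ((s - j1 + 1 : ℕ) : ℝ) = Real.logb 2 ((2:ℝ) ^ (s - j1 + 1)) := by
      rw [Real.logb_pow, Real.logb_self_eq_one (by norm_num)]
      ring
    calc (T.card : ℝ) ≤ ((s - j1 + 1 : ℕ) : ℝ) := hc1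
      _ = Real.logb 2 ((2:ℝ) ^ (s - j1 + 1)) := hc2
      _ ≤ L := Real.logb_le_logb_of_le (by norm_num) (by positivity) hpow
  -- finish
  have hmain : (cubeBoundary k s B : ℝ) ≤ 2 * ℓ + ℓ * T.card := by
    exact_mod_cast Nat.cast_le.mpr hnat
  have hℓR' : (0:ℝ) ≤ ℓ := le_of_lt hℓR
  have e1 : (ℓ:ℝ) * T.card ≤ ℓ * L := mul_le_mul_of_nonneg_left hLT hℓR'
  have e2 : (ℓ:ℝ) * 1 ≤ ℓ * L := mul_le_mul_of_nonneg_left hL1 hℓR'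
  nlinarith [hmain]
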